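/- Let H be a vertex-minimal finite simple graph with θ(H) ≤ 8 and χ'_s(H) > 20. Then every 3-vertex adjacent only to 4-vertices is adjacent to three 4-vertices each of which has exactly one 3-neighbor. -/

import Mathlib

open SimpleGraph

variable {V : Type*}

/-- Two edges are at distance at most 2 (they "see" each other): distinct and
some endpoint of one equals or is adjacent to some endpoint of the other. -/
def EdgeSees (G : SimpleGraph V) (e e' : Sym2 V) : Prop :=
  e ≠ e' ∧ ∃ a ∈ e, ∃ b ∈ e', a = b ∨ G.Adj a b

/-- `G` admits a strong `N`-edge-coloring. -/
def HasStrongColoring (G : SimpleGraph V) (N : ℕ) : Prop :=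
  ∃ f : G.edgeSet → Fin N, ∀ e e' : G.edgeSet, EdgeSees G e.val e'.val → f e ≠ f e'

/-- `G − v`: delete the vertex `v` (remove all edges incident to it). -/
def DelV (G : SimpleGraph V) (v : V) : SimpleGraph V where
  Adj a b := G.Adj a b ∧ a ≠ v ∧ b ≠ v
  symm := ⟨fun _ _ h => ⟨h.1.symm, h.2.2, h.2.1⟩⟩
  loopless := ⟨fun _ h => G.irrefl h.1⟩

lemma edgeSees_symm (G : SimpleGraph V) {e e' : Sym2 V} (h : EdgeSees G e e') :
    EdgeSees G e' e := by
  obtain ⟨hne, a, ha, b, hb, hab⟩ := h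
  refine ⟨hne.symm, b, hb, a, ha, ?_⟩
  rcases hab with h | h
  · exact Or.inl h.symm
  · exact Or.inr h.symm

/-- θ ≤ 8, χ'ₛ > 20: every 3(D)-vertex (3-vertex with all neighbors of degree 4)
is adjacent only to 4(B)-vertices (4-vertices with exactly one 3-neighbor). -/
theorem stmt11 [Fintype V] (H : SimpleGraph V) [DecidableRel H.Adj]
    (hore : ∀ u w, H.Adj u w → H.degree u + H.degree w ≤ 8)
    (hnc : ¬ HasStrongColoring H 20)
    (hmin : ∀ v, HasStrongColoring (DelV H v) 20) :
    ∀ x, H.degree x = 3 → (∀ y, H.Adj x y → H.degree y = 4) →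
      ∀ y, H.Adj x y → {z | H.Adj y z ∧ H.degree z = 3}.ncard = 1 := by
  classical
  intro x hx3 hnb y hxy
  have key : ∀ z, H.Adj y z → H.degree z = 3 → z = x := by
    intro z hyz hz3
    by_contra hzx
    apply hnc
    obtain ⟨f, hf⟩ := hmin x
    -- the other two neighbors of x
    have hyNx : y ∈ H.neighborFinset x := by rwa [mem_neighborFinset]
    have hNx : (H.neighborFinset x).card = 3 := hx3
    have h2 : ((H.neighborFinset x).erase y).card = 2 := by
      rw [Finset.card_erase_of_mem hyNx, hNx]
    obtain ⟨p, q, hpq, hpqE⟩ := Finset.card_eq_two.mp h2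
    have hp' : p ∈ (H.neighborFinset x).erase y := by
      rw [hpqE]; exact Finset.mem_insert_self p {q}
    have hq' : q ∈ (H.neighborFinset x).erase y := by
      rw [hpqE]; exact Finset.mem_insert_of_mem (Finset.mem_singleton_self q)
    have hpy : p ≠ y := (Finset.mem_erase.mp hp').1
    have hqy : q ≠ y := (Finset.mem_erase.mp hq').1
    have hxp : H.Adj x p := by
      rw [← mem_neighborFinset]; exact Finset.mem_of_mem_erase hp'
    have hxq : H.Adj x q := by
      rw [← mem_neighborFinset]; exact Finset.mem_of_mem_erase hq'
    have hNxeq : H.neighborFinset x = insert y {p, q} := by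
      rw [← Finset.insert_erase hyNx, hpqE]
    -- extension of f to all of Sym2 V
    set fbar : Sym2 V → Fin 20 :=
      fun e => if h : e ∈ (DelV H x).edgeSet then f ⟨e, h⟩ else 0 with hfbar
    -- edges of H − x incident to v but not to a
    set inc2 : V → V → Finset (Sym2 V) :=
      fun v a => H.edgeFinset.filter (fun e => v ∈ e ∧ a ∉ e) with hinc2def
    have hinc2 : ∀ v a, H.Adj v a → (inc2 v a).card ≤ H.degree v - 1 := by
      intro v a hva
      have hsub : inc2 v a ⊆ (H.incidenceFinset v).erase s(v, a) := by
        intro e he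
        rw [hinc2def] at he
        simp only [Finset.mem_filter, mem_edgeFinset] at he
        obtain ⟨heE, hve, hae⟩ := he
        refine Finset.mem_erase.mpr ⟨?_, ?_⟩
        · rintro rfl; exact hae (Sym2.mem_mk_right v a)
        · rw [mem_incidenceFinset]; exact ⟨heE, hve⟩
      have hmem : s(v, a) ∈ H.incidenceFinset v := by
        rw [mem_incidenceFinset]
        exact ⟨(mem_edgeSet H).mpr hva, Sym2.mem_mk_left v a⟩
      calc (inc2 v a).card ≤ ((H.incidenceFinset v).erase s(v, a)).card :=
            Finset.card_le_card hsub
        _ = (H.incidenceFinset v).card - 1 := Finset.card_erase_of_mem hmem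
        _ = H.degree v - 1 := by rw [card_incidenceFinset_eq_degree]
    -- edges of H - x that "see" the edge s(x,u)
    set T : V → Finset (Sym2 V) :=
      fun u => H.edgeFinset.filter (fun e => x ∉ e ∧ EdgeSees H s(x, u) e) with hTdef
    have hTsub : ∀ u, H.Adj x u →
        T u ⊆ (inc2 y x ∪ inc2 p x ∪ inc2 q x) ∪
          ((H.neighborFinset u).erase x).biUnion (fun w => inc2 w u) := by
      intro u hxu e he
      rw [hTdef] at he
      simp only [Finset.mem_filter] at he
      obtain ⟨heE, hxe, hne, a, ha, b, hb, hab⟩ := he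
      have hbx : b ≠ x := fun h => hxe (h ▸ hb)
      have hfirst : ∀ c, H.Adj x c → c ∈ e →
          e ∈ inc2 y x ∪ inc2 p x ∪ inc2 q x := by
        intro c hxc hce
        have hcN : c ∈ H.neighborFinset x := by rwa [mem_neighborFinset]
        rw [hNxeq] at hcN
        simp only [Finset.mem_insert, Finset.mem_singleton] at hcN
        have hmk : ∀ v, c = v → e ∈ inc2 v x := by
          rintro v rfl
          rw [hinc2def]
          exact Finset.mem_filter.mpr ⟨heE, hce, hxe⟩
        rcases hcN with h | h | h
        · exact Finset.mem_union_left _ (Finset.mem_union_left _ (hmk y h))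
        · exact Finset.mem_union_left _ (Finset.mem_union_right _ (hmk p h))
        · exact Finset.mem_union_right _ (hmk q h)
      rw [Sym2.mem_iff] at ha
      rcases ha with rfl | rfl
      · rcases hab with rfl | hadj
        · exact absurd hb hxe
        · exact Finset.mem_union_left _ (hfirst b hadj hb)
      · by_cases hue : a ∈ e
        · exact Finset.mem_union_left _ (hfirst a hxu hue)
        · rcases hab with rfl | hadj
          · exact absurd hb hue
          · apply Finset.mem_union_right
            refine Finset.mem_biUnion.mpr ⟨b, ?_, ?_⟩
            · exact Finset.mem_erase.mpr ⟨hbx, by rwa [mem_neighborFinset]⟩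
            · rw [hinc2def]; exact Finset.mem_filter.mpr ⟨heE, hb, hue⟩
    -- cardinality bound
    have hdegw : ∀ u, H.Adj x u → ∀ w ∈ (H.neighborFinset u).erase x,
        H.degree w - 1 ≤ 3 := by
      intro u hxu w hw
      have huw : H.Adj u w := by
        rw [← mem_neighborFinset]; exact Finset.mem_of_mem_erase hw
      have := hore u w huw
      have hu4 : H.degree u = 4 := hnb u hxu
      omega
    have hWcard : ∀ u, H.Adj x u → ((H.neighborFinset u).erase x).card = 3 := by
      intro u hxu
      have hxN : x ∈ H.neighborFinset u := by
        rw [mem_neighborFinset]; exact hxu.symm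
      rw [Finset.card_erase_of_mem hxN]
      have : (H.neighborFinset u).card = H.degree u := rfl
      rw [this, hnb u hxu]
    have hTcard : ∀ u, H.Adj x u →
        (T u).card ≤ 9 + ∑ w ∈ (H.neighborFinset u).erase x, (H.degree w - 1) := by
      intro u hxu
      have h1 : (T u).card ≤
          (inc2 y x ∪ inc2 p x ∪ inc2 q x).card +
          (((H.neighborFinset u).erase x).biUnion (fun w => inc2 w u)).card := by
        calc (T u).card ≤ _ := Finset.card_le_card (hTsub u hxu)
          _ ≤ _ := Finset.card_union_le _ _
      have h2 : (inc2 y x ∪ inc2 p x ∪ inc2 q x).card ≤ 9 := by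
        have hy1 : (inc2 y x).card ≤ 3 := by
          have := hinc2 y x hxy.symm; rw [hnb y hxy] at this; omega
        have hp1 : (inc2 p x).card ≤ 3 := by
          have := hinc2 p x hxp.symm; rw [hnb p hxp] at this; omega
        have hq1 : (inc2 q x).card ≤ 3 := by
          have := hinc2 q x hxq.symm; rw [hnb q hxq] at this; omega
        calc (inc2 y x ∪ inc2 p x ∪ inc2 q x).card
            ≤ (inc2 y x ∪ inc2 p x).card + (inc2 q x).card := Finset.card_union_le _ _
          _ ≤ (inc2 y x).card + (inc2 p x).card + (inc2 q x).card := by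
              have := Finset.card_union_le (inc2 y x) (inc2 p x); omega
          _ ≤ 9 := by omega
      have h3 : (((H.neighborFinset u).erase x).biUnion (fun w => inc2 w u)).card ≤
          ∑ w ∈ (H.neighborFinset u).erase x, (H.degree w - 1) := by
        calc _ ≤ ∑ w ∈ (H.neighborFinset u).erase x, (inc2 w u).card :=
              Finset.card_biUnion_le
          _ ≤ _ := by
              refine Finset.sum_le_sum ?_
              intro w hw
              refine hinc2 w u ?_
              have : H.Adj u w := by
                rw [← mem_neighborFinset]; exact Finset.mem_of_mem_erase hw
              exact this.symm
      omega
    -- generic bound: 18; for y: 17 thanks to z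
    have hTgen : ∀ u, H.Adj x u → (T u).card ≤ 18 := by
      intro u hxu
      have hsum : ∑ w ∈ (H.neighborFinset u).erase x, (H.degree w - 1) ≤ 9 := by
        calc _ ≤ ((H.neighborFinset u).erase x).card • 3 :=
              Finset.sum_le_card_nsmul _ _ 3 (hdegw u hxu)
          _ = 9 := by rw [hWcard u hxu]; norm_num
      have := hTcard u hxu
      omega
    have hTy : (T y).card ≤ 17 := by
      have hzW : z ∈ (H.neighborFinset y).erase x :=
        Finset.mem_erase.mpr ⟨hzx, by rwa [mem_neighborFinset]⟩
      have hsum : ∑ w ∈ (H.neighborFinset y).erase x, (H.degree w - 1) ≤ 8 := by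
        have hsplit := Finset.sum_erase_add ((H.neighborFinset y).erase x)
          (fun w => H.degree w - 1) hzW
        have hz2 : H.degree z - 1 = 2 := by rw [hz3]
        have hrest : ∑ w ∈ ((H.neighborFinset y).erase x).erase z,
            (H.degree w - 1) ≤ 6 := by
          calc _ ≤ (((H.neighborFinset y).erase x).erase z).card • 3 := by
                refine Finset.sum_le_card_nsmul _ _ 3 ?_
                intro w hw
                exact hdegw y hxy w (Finset.mem_of_mem_erase hw)
            _ = 6 := by
                rw [Finset.card_erase_of_mem hzW, hWcard y hxy]; norm_num
        omega
      have := hTcard y hxy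
      omega
    -- forbidden colors
    set F : V → Finset (Fin 20) := fun u => (T u).image fbar with hFdef
    have hFcard : ∀ u, (F u).card ≤ (T u).card := fun u => Finset.card_image_le
    have pick : ∀ (s : Finset (Fin 20)), s.card < 20 → ∃ c, c ∉ s := by
      intro s hs
      by_contra h
      push_neg at h
      have : s = Finset.univ := Finset.eq_univ_iff_forall.mpr h
      rw [this, Finset.card_univ] at hs
      simp at hs
    obtain ⟨ca, hca⟩ := pick (F p) (by have := hFcard p; have := hTgen p hxp; omega)
    obtain ⟨cb, hcb⟩ := pick (F q ∪ {ca}) (by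
      have h1 := Finset.card_union_le (F q) ({ca} : Finset (Fin 20))
      have := hFcard q; have := hTgen q hxq
      simp only [Finset.card_singleton] at h1
      omega)
    obtain ⟨cc, hcc⟩ := pick (F y ∪ {ca, cb}) (by
      have h1 := Finset.card_union_le (F y) ({ca, cb} : Finset (Fin 20))
      have h2 : ({ca, cb} : Finset (Fin 20)).card ≤ 2 := by
        calc _ ≤ ({cb} : Finset (Fin 20)).card + 1 := Finset.card_insert_le _ _
          _ = 2 := by simp
      have := hFcard y
      omega)
    simp only [Finset.mem_union, Finset.mem_singleton, Finset.mem_insert, not_or] at hcb hcc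
    obtain ⟨hcbF, hcbne⟩ := hcb
    obtain ⟨hccF, hccca, hcccb⟩ := hcc
    -- the coloring of H
    set col : V → Fin 20 := fun u => if u = p then ca else if u = q then cb else cc
      with hcoldef
    set g : H.edgeSet → Fin 20 := fun e =>
      if e.val = s(x, p) then ca else if e.val = s(x, q) then cb
      else if x ∈ e.val then cc else fbar e.val with hgdef
    -- basic sym2 facts
    have s2 : ∀ u v : V, u ≠ x → (s(x, u) = s(x, v) ↔ u = v) := by
      intro u v hu
      rw [Sym2.eq_iff]
      constructor
      · rintro (⟨-, h⟩ | ⟨h1, h2⟩)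
        · exact h
        · exact absurd h2 hu
      · rintro rfl; exact Or.inl ⟨rfl, rfl⟩
    have form : ∀ ev : Sym2 V, ev ∈ H.edgeSet → x ∈ ev →
        ∃ u, H.Adj x u ∧ ev = s(x, u) := by
      intro ev
      induction ev using Sym2.ind with
      | _ a b =>
        rw [mem_edgeSet, Sym2.mem_iff]
        rintro hab (rfl | rfl)
        · exact ⟨b, hab, rfl⟩
        · exact ⟨a, hab.symm, Sym2.eq_swap⟩
    have free_mem : ∀ ev : Sym2 V, ev ∈ H.edgeSet → x ∉ ev →
        ev ∈ (DelV H x).edgeSet := by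
      intro ev
      induction ev using Sym2.ind with
      | _ a b =>
        intro hab hx
        rw [Sym2.mem_iff, not_or] at hx
        exact ⟨(mem_edgeSet H).mp hab, Ne.symm hx.1, Ne.symm hx.2⟩
    have hg_free : ∀ e : H.edgeSet, x ∉ e.val → g e = fbar e.val := by
      intro e he
      rw [hgdef]
      have h1 : e.val ≠ s(x, p) := fun h => he (h ▸ Sym2.mem_mk_left x p)
      have h2 : e.val ≠ s(x, q) := fun h => he (h ▸ Sym2.mem_mk_left x q)
      simp only [h1, h2, he, if_false, if_neg]
    have hgu : ∀ (e : H.edgeSet) (u : V), H.Adj x u → e.val = s(x, u) →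
        g e = col u := by
      intro e u hxu hu
      have hux : u ≠ x := hxu.ne'
      rw [hgdef, hcoldef]
      simp only [hu]
      by_cases h1 : u = p
      · simp [h1]
      · rw [if_neg (fun h => h1 ((s2 u p hux).mp h)), if_neg h1]
        by_cases h2 : u = q
        · simp [h2]
        · rw [if_neg (fun h => h2 ((s2 u q hux).mp h)), if_neg h2,
            if_pos (Sym2.mem_mk_left x u)]
    have hmem3 : ∀ u, H.Adj x u → u = y ∨ u = p ∨ u = q := by
      intro u hxu
      have huN : u ∈ H.neighborFinset x := by rwa [mem_neighborFinset]
      rw [hNxeq] at huN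
      simpa using huN
    have hcy : col y = cc := by
      simp [hcoldef, Ne.symm hpy, Ne.symm hqy]
    have hcp : col p = ca := by simp [hcoldef]
    have hcq : col q = cb := by simp [hcoldef, Ne.symm hpq]
    have hcol_notF : ∀ u, H.Adj x u → col u ∉ F u := by
      intro u hxu
      rcases hmem3 u hxu with h | h | h <;> rw [h]
      · rw [hcy]; exact hccF
      · rw [hcp]; exact hca
      · rw [hcq]; exact hcbF
    have hcol_ne : ∀ u u', H.Adj x u → H.Adj x u' → u ≠ u' → col u ≠ col u' := by
      intro u u' hxu hxu' hne
      rcases hmem3 u hxu with h | h | h <;> rcases hmem3 u' hxu' with h' | h' | h' <;>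
        rw [h, h'] at hne ⊢
      · exact absurd rfl hne
      · rw [hcy, hcp]; exact hccca
      · rw [hcy, hcq]; exact hcccb
      · rw [hcp, hcy]; exact fun hh => hccca hh.symm
      · exact absurd rfl hne
      · rw [hcp, hcq]; exact fun hh => hcbne hh.symm
      · rw [hcq, hcy]; exact fun hh => hcccb hh.symm
      · rw [hcq, hcp]; exact hcbne
      · exact absurd rfl hne
    -- cross conflict: colored edge vs free edge
    have hcross : ∀ e e' : H.edgeSet, EdgeSees H e.val e'.val →
        x ∈ e.val → x ∉ e'.val → g e ≠ g e' := by
      intro e e' hsee hxe hxe'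
      obtain ⟨u, hxu, hu⟩ := form e.val e.prop hxe
      rw [hgu e u hxu hu, hg_free e' hxe']
      intro hcontra
      apply hcol_notF u hxu
      rw [hFdef, hcontra]
      refine Finset.mem_image.mpr ⟨e'.val, ?_, rfl⟩
      rw [hTdef]
      refine Finset.mem_filter.mpr ⟨mem_edgeFinset.mpr e'.prop, hxe', ?_⟩
      rw [← hu]; exact hsee
    refine ⟨g, ?_⟩
    intro e e' hsee
    by_cases hxe : x ∈ e.val <;> by_cases hxe' : x ∈ e'.val
    · -- both contain x
      obtain ⟨u, hxu, hu⟩ := form e.val e.prop hxe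
      obtain ⟨u', hxu', hu'⟩ := form e'.val e'.prop hxe'
      rw [hgu e u hxu hu, hgu e' u' hxu' hu']
      refine hcol_ne u u' hxu hxu' ?_
      rintro rfl
      exact hsee.1 (hu.trans hu'.symm)
    · exact hcross e e' hsee hxe hxe'
    · exact (hcross e' e (edgeSees_symm H hsee) hxe' hxe).symm
    · -- both free
      have heD : e.val ∈ (DelV H x).edgeSet := free_mem e.val e.prop hxe
      have heD' : e'.val ∈ (DelV H x).edgeSet := free_mem e'.val e'.prop hxe'
      rw [hg_free e hxe, hg_free e' hxe', hfbar]
      simp only [dif_pos heD, dif_pos heD']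
      apply hf
      obtain ⟨hne, a, ha, b, hb, hab⟩ := hsee
      refine ⟨hne, a, ha, b, hb, ?_⟩
      rcases hab with rfl | hadj
      · exact Or.inl rfl
      · exact Or.inr ⟨hadj, fun h => hxe (h ▸ ha), fun h => hxe' (h ▸ hb)⟩
  have hset : {z | H.Adj y z ∧ H.degree z = 3} = {x} := by
    ext w
    simp only [Set.mem_setOf_eq, Set.mem_singleton_iff]
    constructor
    · rintro ⟨h1, h2⟩; exact key w h1 h2
    · rintro rfl; exact ⟨hxy.symm, hx3⟩
  rw [hset]
  exact Set.ncard_singleton x
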